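/- arXiv:1706.01781 — 6 statements merged into one kernel-verified Lean document; each statement's English description precedes it below -/
import Mathlib

section
/- Let α be a nonzero real number and let X = F(α·1, 0, 0)/α scaled, i.e., X is the diagonal matrix diag(1, −1). Then the adjoint orbit of αX under G = SL(2,ℝ), namely { g(αX)g⁻¹ : g ∈ SL(2,ℝ) }, equals the one-sheeted hyperboloid { F(x,y,z) : x, y, z ∈ ℝ, x² + y² − z² = α² }. -/
/-- The matrix `F(x,y,z)` with rows `(x, y+z)` and `(y−z, −x)`, an element of `𝔰𝔩(2,ℝ)`. -/
def F (x y z : ℝ) : Matrix (Fin 2) (Fin 2) ℝ := !![x, y + z; y - z, -x]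

/-- `X = diag(1, −1)`. -/
def X : Matrix (Fin 2) (Fin 2) ℝ := !![1, 0; 0, -1]

lemma conj_formula (α a b c d : ℝ) :
    !![a,b;c,d] * (α • X) * !![d,-b;-c,a] =
      F (α*(a*d+b*c)) (α*(c*d - a*b)) (-(α*(a*b+c*d))) := by
  have : α • X = !![α, 0; 0, -α] := by
    ext i j; fin_cases i <;> fin_cases j <;> simp [X]
  rw [this, F]
  ext i j
  fin_cases i <;> fin_cases j <;>
    simp [Matrix.mul_apply, Fin.sum_univ_succ] <;> ring

lemma exists_abcd (α x y z : ℝ) (hα : α ≠ 0) (h : x ^ 2 + y ^ 2 - z ^ 2 = α ^ 2) :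
    ∃ a b c d : ℝ, a * d - b * c = 1 ∧ x = α * (a*d + b*c) ∧ y = α * (c*d - a*b) ∧
      z = -(α * (a*b + c*d)) := by
  by_cases hx : x + α = 0
  · by_cases hz : y - z = 0
    · refine ⟨-(y+z)/(2*α), 1, -1, 0, by ring, ?_, ?_, ?_⟩ <;> field_simp
      · linarith
      · linear_combination hz
      · linear_combination (-1) * hz
    · have hyz : y + z = 0 := by
        have h0 : (y + z) * (y - z) = 0 := by linear_combination h + (α - x) * hx
        rcases mul_eq_zero.mp h0 with h' | h'
        · exact h'
        · exact absurd h' hz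
      refine ⟨0, -1, 1, (y-z)/(2*α), by ring, ?_, ?_, ?_⟩ <;> field_simp
      · linarith
      · linear_combination hyz
      · linear_combination hyz
  · refine ⟨1, -(y+z)/(2*α), (y-z)/(x+α), (x+α)/(2*α), ?_, ?_, ?_, ?_⟩ <;> field_simp
    · linear_combination h
    · linear_combination h
    · ring
    · ring

lemma sl2_inv_coe (g : Matrix.SpecialLinearGroup (Fin 2) ℝ) :
    ((g⁻¹ : Matrix.SpecialLinearGroup (Fin 2) ℝ) : Matrix (Fin 2) (Fin 2) ℝ) =
      !![g 1 1, -(g 0 1); -(g 1 0), g 0 0] := by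
  rw [Matrix.SpecialLinearGroup.coe_inv, Matrix.adjugate_fin_two]

/-- For a nonzero real number `α`, the adjoint `SL(2,ℝ)`-orbit of `αX` is the one-sheeted
hyperboloid `{F(x,y,z) : x² + y² − z² = α²}`. -/
theorem adjoint_orbit_X (α : ℝ) (hα : α ≠ 0) :
    {A : Matrix (Fin 2) (Fin 2) ℝ | ∃ g : Matrix.SpecialLinearGroup (Fin 2) ℝ,
        A = (g : Matrix (Fin 2) (Fin 2) ℝ) * (α • X) * ((g⁻¹ : Matrix.SpecialLinearGroup (Fin 2) ℝ) : Matrix (Fin 2) (Fin 2) ℝ)} =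
    {A : Matrix (Fin 2) (Fin 2) ℝ |
        ∃ x y z : ℝ, x ^ 2 + y ^ 2 - z ^ 2 = α ^ 2 ∧ A = F x y z} := by
  ext A
  simp only [Set.mem_setOf_eq]
  constructor
  · rintro ⟨g, rfl⟩
    set a := (g : Matrix (Fin 2) (Fin 2) ℝ) 0 0 with ha
    set b := (g : Matrix (Fin 2) (Fin 2) ℝ) 0 1 with hb
    set c := (g : Matrix (Fin 2) (Fin 2) ℝ) 1 0 with hc
    set d := (g : Matrix (Fin 2) (Fin 2) ℝ) 1 1 with hd
    have hdet : a * d - b * c = 1 := by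
      have := g.prop
      rwa [Matrix.det_fin_two] at this
    refine ⟨α*(a*d+b*c), α*(c*d - a*b), -(α*(a*b+c*d)), ?_, ?_⟩
    · linear_combination (α^2*(a*d-b*c+1)) * hdet
    · rw [sl2_inv_coe, ← conj_formula α a b c d]
      congr 1
      · congr 1
        exact Matrix.eta_fin_two _
  · rintro ⟨x, y, z, h, rfl⟩
    obtain ⟨a, b, c, d, hdet, hx, hy, hz⟩ := exists_abcd α x y z hα h
    refine ⟨⟨!![a,b;c,d], by rw [Matrix.det_fin_two_of]; exact hdet⟩, ?_⟩
    erw [sl2_inv_coe]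
    show F x y z = !![a,b;c,d] * (α • X) * _
    simp only [Matrix.SpecialLinearGroup.coe_mk]
    rw [show (!![a,b;c,d] : Matrix (Fin 2) (Fin 2) ℝ) 1 1 = d from rfl,
      show (!![a,b;c,d] : Matrix (Fin 2) (Fin 2) ℝ) 0 1 = b from rfl,
      show (!![a,b;c,d] : Matrix (Fin 2) (Fin 2) ℝ) 1 0 = c from rfl,
      show (!![a,b;c,d] : Matrix (Fin 2) (Fin 2) ℝ) 0 0 = a from rfl]
    rw [conj_formula α a b c d, hx, hy, hz]
end

section
/- Let α be a nonzero real number and let Y be the matrix with rows (0, 1) and (1, 0). Then the adjoint orbit of αY under G = SL(2,ℝ), namely { g(αY)g⁻¹ : g ∈ SL(2,ℝ) }, equals the one-sheeted hyperboloid { F(x,y,z) : x, y, z ∈ ℝ, x² + y² − z² = α² }. -/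
/-- `Y` is the matrix with rows `(0, 1)` and `(1, 0)`. -/
def Y : Matrix (Fin 2) (Fin 2) ℝ := !![0, 1; 1, 0]

lemma key_mul (α a b c d : ℝ) :
    !![a, b; c, d] * (α • Y) * !![d, -b; -c, a] =
      !![α * (b * d - a * c), α * (a ^ 2 - b ^ 2);
         α * (d ^ 2 - c ^ 2), α * (a * c - b * d)] := by
  ext i j
  fin_cases i <;> fin_cases j <;>
    simp [Y, Matrix.mul_apply, Fin.sum_univ_two] <;> ring

lemma exists_ac (α x y z : ℝ) (hα : α ≠ 0) (h : x ^ 2 + y ^ 2 - z ^ 2 = α ^ 2) :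
    ∃ a c : ℝ, (y - z) * a ^ 2 - 2 * x * a * c - (y + z) * c ^ 2 = α := by
  by_cases hyz : y - z = 0
  · obtain rfl : y = z := by linarith
    have hx : x ≠ 0 := by
      intro h0
      apply hα
      have h2 : α ^ 2 = 0 := by rw [← h, h0]; ring
      exact pow_eq_zero_iff two_ne_zero |>.mp h2
    refine ⟨-(α + 2 * y) / (2 * x), 1, ?_⟩
    field_simp
    ring
  · set c : ℝ := ((y - z) - α) / (2 * α) with hc
    set a : ℝ := ((α + (y - z)) / 2 + x * ((y - z) - α) / (2 * α)) / (y - z) with ha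
    refine ⟨a, c, ?_⟩
    have e2 : c * α = ((y - z) - α) / 2 := by rw [hc]; field_simp
    have key : (y - z) * a - x * c = (α + (y - z)) / 2 := by
      rw [ha, hc]; field_simp; ring
    have e1 : (y - z) * ((y - z) * a ^ 2 - 2 * x * a * c - (y + z) * c ^ 2) =
        ((y - z) * a - x * c) ^ 2 - c ^ 2 * (x ^ 2 + y ^ 2 - z ^ 2) := by ring
    rw [key, h] at e1
    have e3 : (y - z) * ((y - z) * a ^ 2 - 2 * x * a * c - (y + z) * c ^ 2) =
        (y - z) * α := by
      rw [e1]
      linear_combination (-(c * α + ((y - z) - α) / 2)) * e2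
    exact mul_left_cancel₀ hyz e3

lemma reverse_dir (α x y z : ℝ) (hα : α ≠ 0) (h : x ^ 2 + y ^ 2 - z ^ 2 = α ^ 2) :
    ∃ g : Matrix.SpecialLinearGroup (Fin 2) ℝ,
      F x y z = (g : Matrix (Fin 2) (Fin 2) ℝ) * (α • Y) *
        ((g⁻¹ : Matrix.SpecialLinearGroup (Fin 2) ℝ) : Matrix (Fin 2) (Fin 2) ℝ) := by
  obtain ⟨a, c, hQ⟩ := exists_ac α x y z hα h
  set b : ℝ := (x * a + (y + z) * c) / α with hb
  set d : ℝ := ((y - z) * a - x * c) / α with hd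
  have hb' : α * b = x * a + (y + z) * c := by rw [hb]; field_simp
  have hd' : α * d = (y - z) * a - x * c := by rw [hd]; field_simp
  have hdet : (!![a, b; c, d] : Matrix (Fin 2) (Fin 2) ℝ).det = 1 := by
    rw [Matrix.det_fin_two_of]
    apply mul_left_cancel₀ hα
    linear_combination a * hd' - c * hb' + hQ
  refine ⟨⟨!![a, b; c, d], hdet⟩, ?_⟩
  have hinv : (((⟨!![a, b; c, d], hdet⟩ : Matrix.SpecialLinearGroup (Fin 2) ℝ)⁻¹ :
      Matrix.SpecialLinearGroup (Fin 2) ℝ) : Matrix (Fin 2) (Fin 2) ℝ) = !![d, -b; -c, a] := by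
    refine (Matrix.SpecialLinearGroup.coe_inv _).trans ?_
    simp [Matrix.adjugate_fin_two]
  rw [hinv]
  show F x y z = !![a, b; c, d] * (α • Y) * !![d, -b; -c, a]
  rw [key_mul]
  have h1 : α * (b * d - a * c) = x := by
    apply mul_left_cancel₀ hα
    linear_combination (α * b) * hd' + ((y - z) * a - x * c) * hb' + x * hQ + a * c * h
  have h2 : α * (a ^ 2 - b ^ 2) = y + z := by
    apply mul_left_cancel₀ hα
    linear_combination (y + z) * hQ - a ^ 2 * h - (α * b + x * a + (y + z) * c) * hb'
  have h3 : α * (d ^ 2 - c ^ 2) = y - z := by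
    apply mul_left_cancel₀ hα
    linear_combination (y - z) * hQ + c ^ 2 * h + (α * d + ((y - z) * a - x * c)) * hd'
  ext i j
  fin_cases i <;> fin_cases j <;> simp [F] <;> linarith [h1, h2, h3]

/-- For a nonzero real number `α`, the adjoint `SL(2,ℝ)`-orbit of `αY` is the one-sheeted
hyperboloid `{F(x,y,z) : x² + y² − z² = α²}`. -/
theorem adjoint_orbit_Y (α : ℝ) (hα : α ≠ 0) :
    {A : Matrix (Fin 2) (Fin 2) ℝ | ∃ g : Matrix.SpecialLinearGroup (Fin 2) ℝ,
        A = (g : Matrix (Fin 2) (Fin 2) ℝ) * (α • Y) * ((g⁻¹ : Matrix.SpecialLinearGroup (Fin 2) ℝ) : Matrix (Fin 2) (Fin 2) ℝ)} =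
    {A : Matrix (Fin 2) (Fin 2) ℝ |
        ∃ x y z : ℝ, x ^ 2 + y ^ 2 - z ^ 2 = α ^ 2 ∧ A = F x y z} := by
  ext A
  simp only [Set.mem_setOf_eq]
  constructor
  · rintro ⟨g, rfl⟩
    set a := (g : Matrix (Fin 2) (Fin 2) ℝ) 0 0 with ha
    set b := (g : Matrix (Fin 2) (Fin 2) ℝ) 0 1 with hb
    set c := (g : Matrix (Fin 2) (Fin 2) ℝ) 1 0 with hc
    set d := (g : Matrix (Fin 2) (Fin 2) ℝ) 1 1 with hd
    have hdet : a * d - b * c = 1 := by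
      rw [ha, hb, hc, hd, ← Matrix.det_fin_two]; exact g.2
    have hM : (g : Matrix (Fin 2) (Fin 2) ℝ) = !![a, b; c, d] := by
      rw [ha, hb, hc, hd, ← Matrix.eta_fin_two]
    have hinv : ((g⁻¹ : Matrix.SpecialLinearGroup (Fin 2) ℝ) :
        Matrix (Fin 2) (Fin 2) ℝ) = !![d, -b; -c, a] := by
      rw [Matrix.SpecialLinearGroup.coe_inv, Matrix.adjugate_fin_two]
    refine ⟨α * (b * d - a * c), α * (a ^ 2 - b ^ 2 + d ^ 2 - c ^ 2) / 2,
      α * (a ^ 2 - b ^ 2 - d ^ 2 + c ^ 2) / 2, ?_, ?_⟩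
    · linear_combination (α ^ 2 * (a * d - b * c + 1)) * hdet
    · rw [hM, hinv, key_mul]
      ext i j
      fin_cases i <;> fin_cases j <;> simp [F] <;> ring
  · rintro ⟨x, y, z, h, rfl⟩
    exact reverse_dir α x y z hα h
end

section
/- Let α be a positive real number and let Z be the matrix with rows (0, 1) and (−1, 0). Then the adjoint orbit of αZ under G = SL(2,ℝ), namely { g(αZ)g⁻¹ : g ∈ SL(2,ℝ) }, equals the sheet { F(x,y,z) : x, y, z ∈ ℝ, x² + y² − z² = −α², z > 0 } of the two-sheeted hyperboloid x² + y² − z² = −α². -/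
/-- `Z` is the matrix with rows `(0, 1)` and `(−1, 0)`. -/
def Z : Matrix (Fin 2) (Fin 2) ℝ := !![0, 1; -1, 0]

/-- For a positive real number `α`, the adjoint `SL(2,ℝ)`-orbit of `αZ` is the sheet
`{F(x,y,z) : x² + y² − z² = −α², z > 0}` of the two-sheeted hyperboloid. -/
theorem adjoint_orbit_Z (α : ℝ) (hα : 0 < α) :
    {A : Matrix (Fin 2) (Fin 2) ℝ | ∃ g : Matrix.SpecialLinearGroup (Fin 2) ℝ,
        A = (g : Matrix (Fin 2) (Fin 2) ℝ) * (α • Z) * ((g⁻¹ : Matrix.SpecialLinearGroup (Fin 2) ℝ) : Matrix (Fin 2) (Fin 2) ℝ)} =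
    {A : Matrix (Fin 2) (Fin 2) ℝ |
        ∃ x y z : ℝ, x ^ 2 + y ^ 2 - z ^ 2 = -α ^ 2 ∧ 0 < z ∧ A = F x y z} := by
  ext A
  simp only [Set.mem_setOf_eq]
  constructor
  · rintro ⟨g, rfl⟩
    set a := (g : Matrix (Fin 2) (Fin 2) ℝ) 0 0 with ha
    set b := (g : Matrix (Fin 2) (Fin 2) ℝ) 0 1 with hb
    set c := (g : Matrix (Fin 2) (Fin 2) ℝ) 1 0 with hc
    set d := (g : Matrix (Fin 2) (Fin 2) ℝ) 1 1 with hd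
    have hg : (g : Matrix (Fin 2) (Fin 2) ℝ) = !![a, b; c, d] := by
      rw [ha, hb, hc, hd]; exact Matrix.etaExpand_eq _ |>.symm
    have hdet : a * d - b * c = 1 := by
      have := g.property
      rw [hg, Matrix.det_fin_two_of] at this
      exact this
    have hinv : ((g⁻¹ : Matrix.SpecialLinearGroup (Fin 2) ℝ) : Matrix (Fin 2) (Fin 2) ℝ)
        = !![d, -b; -c, a] := by
      rw [Matrix.SpecialLinearGroup.coe_inv, hg, Matrix.adjugate_fin_two_of]
    refine ⟨-α * (a * c + b * d), α * (a ^ 2 + b ^ 2 - c ^ 2 - d ^ 2) / 2,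
        α * (a ^ 2 + b ^ 2 + c ^ 2 + d ^ 2) / 2, ?_, ?_, ?_⟩
    · linear_combination (-α^2 * (a*d - b*c + 1)) * hdet
    · have hpos : 0 < a ^ 2 + b ^ 2 + c ^ 2 + d ^ 2 := by
        nlinarith [sq_nonneg (a - d), sq_nonneg (b + c)]
      positivity
    · rw [hg, hinv]
      ext i j
      fin_cases i <;> fin_cases j <;>
        simp [F, Z, Matrix.mul_apply, Fin.sum_univ_two, Matrix.smul_apply] <;> ring
  · rintro ⟨x, y, z, hxyz, hz, rfl⟩
    have hα' : α ≠ 0 := ne_of_gt hα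
    have hyz : 0 < y + z := by nlinarith [sq_nonneg x, sq_nonneg (y + z)]
    set s := Real.sqrt ((y + z) / α) with hs
    have hs0 : 0 < s := Real.sqrt_pos.mpr (by positivity)
    have hs0' : s ≠ 0 := ne_of_gt hs0
    have hs2 : s * s = (y + z) / α := Real.mul_self_sqrt (by positivity)
    have hdet : Matrix.det !![s, 0; -x / (α * s), 1 / s] = 1 := by
      rw [Matrix.det_fin_two_of]; field_simp; ring
    refine ⟨⟨!![s, 0; -x / (α * s), 1 / s], hdet⟩, ?_⟩
    have hinv : (((⟨!![s, 0; -x / (α * s), 1 / s], hdet⟩ :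
          Matrix.SpecialLinearGroup (Fin 2) ℝ)⁻¹ :
          Matrix.SpecialLinearGroup (Fin 2) ℝ) : Matrix (Fin 2) (Fin 2) ℝ)
        = !![1 / s, 0; x / (α * s), s] := by
      show Matrix.adjugate !![s, 0; -x / (α * s), 1 / s] = _
      ext i j
      fin_cases i <;> fin_cases j <;> simp [Matrix.adjugate_fin_two_of] <;> ring
    rw [hinv]
    show F x y z = !![s, 0; -x / (α * s), 1 / s] * (α • Z) * !![1 / s, 0; x / (α * s), s]
    have hkey : α * (s * s) = y + z := by rw [hs2]; field_simp
    ext i j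
    fin_cases i <;> fin_cases j <;>
      simp [F, Z, Matrix.mul_apply, Fin.sum_univ_two, Matrix.smul_apply] <;>
      (try field_simp)
    · linear_combination -hkey
    · linear_combination hxyz + (y - z) * hkey
end

section
/- Let α be a positive real number and let S be the matrix with rows (0, 1) and (0, 0). Then the adjoint orbit of αS under G = SL(2,ℝ), namely { g(αS)g⁻¹ : g ∈ SL(2,ℝ) }, equals the upper one-sheeted cone { F(x,y,z) : x, y, z ∈ ℝ, x² + y² − z² = 0, z > 0 }. -/
/-- `S` is the matrix with rows `(0, 1)` and `(0, 0)`. -/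
def S : Matrix (Fin 2) (Fin 2) ℝ := !![0, 1; 0, 0]

lemma conj_S_eq (α a b c d : ℝ) :
    !![a, b; c, d] * (α • S) * !![d, -b; -c, a] =
      F (-(α * (a * c))) (α * (a ^ 2 - c ^ 2) / 2) (α * (a ^ 2 + c ^ 2) / 2) := by
  ext i j
  fin_cases i <;> fin_cases j <;>
    simp [F, S, Matrix.mul_apply, Fin.sum_univ_two] <;> ring

/-- For a positive real number `α`, the adjoint `SL(2,ℝ)`-orbit of `αS` is the upper
one-sheeted cone `{F(x,y,z) : x² + y² − z² = 0, z > 0}`. -/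
theorem adjoint_orbit_S (α : ℝ) (hα : 0 < α) :
    {A : Matrix (Fin 2) (Fin 2) ℝ | ∃ g : Matrix.SpecialLinearGroup (Fin 2) ℝ,
        A = (g : Matrix (Fin 2) (Fin 2) ℝ) * (α • S) * ((g⁻¹ : Matrix.SpecialLinearGroup (Fin 2) ℝ) : Matrix (Fin 2) (Fin 2) ℝ)} =
    {A : Matrix (Fin 2) (Fin 2) ℝ |
        ∃ x y z : ℝ, x ^ 2 + y ^ 2 - z ^ 2 = 0 ∧ 0 < z ∧ A = F x y z} := by
  ext A
  simp only [Set.mem_setOf_eq]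
  constructor
  · rintro ⟨g, rfl⟩
    set a := (g : Matrix (Fin 2) (Fin 2) ℝ) 0 0 with ha
    set b := (g : Matrix (Fin 2) (Fin 2) ℝ) 0 1 with hb
    set c := (g : Matrix (Fin 2) (Fin 2) ℝ) 1 0 with hc
    set d := (g : Matrix (Fin 2) (Fin 2) ℝ) 1 1 with hd
    have hg : (g : Matrix (Fin 2) (Fin 2) ℝ) = !![a, b; c, d] := by
      rw [ha, hb, hc, hd]; exact Matrix.etaExpand_eq _ |>.symm
    have hdet : a * d - b * c = 1 := by
      have := g.2
      rwa [Matrix.det_fin_two] at this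
    have hac : 0 < a ^ 2 + c ^ 2 := by
      rcases eq_or_ne a 0 with h | h
      · rcases eq_or_ne c 0 with h' | h'
        · rw [h, h'] at hdet; simp at hdet
        · positivity
      · positivity
    refine ⟨-(α * (a * c)), α * (a ^ 2 - c ^ 2) / 2, α * (a ^ 2 + c ^ 2) / 2, ?_, ?_, ?_⟩
    · ring
    · positivity
    · rw [Matrix.SpecialLinearGroup.coe_inv, hg, Matrix.adjugate_fin_two_of, conj_S_eq]
  · rintro ⟨x, y, z, h1, hz, rfl⟩
    have hyz : 0 ≤ z + y := by nlinarith
    rcases eq_or_lt_of_le hyz with h0 | hpos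
    · -- z + y = 0 : so y = -z, x = 0
      have hy : y = -z := by linarith
      have hx : x = 0 := by nlinarith
      have hcpos : 0 < 2 * z / α := by positivity
      set c := Real.sqrt (2 * z / α) with hcdef
      have hcne : c ≠ 0 := by positivity
      have hc2 : α * c ^ 2 = 2 * z := by
        rw [hcdef, Real.sq_sqrt hcpos.le]; field_simp
      refine ⟨⟨!![0, -1/c; c, 0], by
        rw [Matrix.det_fin_two_of, div_mul_cancel₀ _ hcne]; norm_num⟩, ?_⟩
      show F x y z = !![0, -1/c; c, 0] * (α • S) * (!![0, -1/c; c, 0]).adjugate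
      rw [Matrix.adjugate_fin_two_of, conj_S_eq]
      have e1 : -(α * ((0:ℝ) * c)) = x := by rw [hx]; ring
      have e2 : α * ((0:ℝ) ^ 2 - c ^ 2) / 2 = y := by rw [hy]; linear_combination (-1/2 : ℝ) * hc2
      have e3 : α * ((0:ℝ) ^ 2 + c ^ 2) / 2 = z := by linear_combination (1/2 : ℝ) * hc2
      rw [e1, e2, e3]
    · -- z + y > 0
      have hapos : 0 < (z + y) / α := by positivity
      set a := Real.sqrt ((z + y) / α) with hadef
      have hane : a ≠ 0 := by positivity
      have haa : α * a ^ 2 = z + y := by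
        rw [hadef, Real.sq_sqrt hapos.le]; field_simp
      set c := -x / (α * a) with hcdef
      have hc2 : α * c ^ 2 = z - y := by
        have h2 : (α * a) ^ 2 = α * (z + y) := by rw [mul_pow]; nlinarith
        have hx2 : x ^ 2 = (z + y) * (z - y) := by nlinarith
        rw [hcdef, div_pow, h2, neg_pow, Even.neg_one_pow (by norm_num)]
        field_simp
        linear_combination hx2
      refine ⟨⟨!![a, 0; c, 1/a], by
        rw [Matrix.det_fin_two_of, mul_one_div_cancel hane]; norm_num⟩, ?_⟩
      show F x y z = !![a, 0; c, 1/a] * (α • S) * (!![a, 0; c, 1/a]).adjugate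
      rw [Matrix.adjugate_fin_two_of, conj_S_eq]
      have hxc : -(α * (a * c)) = x := by rw [hcdef]; field_simp
      have e2 : α * (a ^ 2 - c ^ 2) / 2 = y := by linear_combination (1/2 : ℝ) * haa - (1/2 : ℝ) * hc2
      have e3 : α * (a ^ 2 + c ^ 2) / 2 = z := by linear_combination (1/2 : ℝ) * haa + (1/2 : ℝ) * hc2
      rw [hxc, e2, e3]
end

section
/- Let α be a positive real number and let T be the matrix with rows (0, 0) and (1, 0). Then the adjoint orbit of αT under G = SL(2,ℝ), namely { g(αT)g⁻¹ : g ∈ SL(2,ℝ) }, equals the lower one-sheeted cone { F(x,y,z) : x, y, z ∈ ℝ, x² + y² − z² = 0, z < 0 }; moreover for α < 0 the orbit of αT equals the upper cone { F(x,y,z) : x² + y² − z² = 0, z > 0 }. -/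
/-- `T` is the matrix with rows `(0, 0)` and `(1, 0)`. -/
def T : Matrix (Fin 2) (Fin 2) ℝ := !![0, 0; 1, 0]

lemma conj_eq (α : ℝ) (g : Matrix.SpecialLinearGroup (Fin 2) ℝ) :
    (g : Matrix (Fin 2) (Fin 2) ℝ) * (α • T) * ((g⁻¹ : Matrix.SpecialLinearGroup (Fin 2) ℝ) : Matrix (Fin 2) (Fin 2) ℝ)
      = F (α * ((g : Matrix (Fin 2) (Fin 2) ℝ) 0 1 * (g : Matrix (Fin 2) (Fin 2) ℝ) 1 1))
          (α * ((g : Matrix (Fin 2) (Fin 2) ℝ) 1 1 ^ 2 - (g : Matrix (Fin 2) (Fin 2) ℝ) 0 1 ^ 2) / 2)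
          (-(α * ((g : Matrix (Fin 2) (Fin 2) ℝ) 0 1 ^ 2 + (g : Matrix (Fin 2) (Fin 2) ℝ) 1 1 ^ 2) / 2)) := by
  rw [Matrix.SpecialLinearGroup.coe_inv]
  ext i j
  fin_cases i <;> fin_cases j <;>
    simp [F, T, Matrix.adjugate_fin_two, Matrix.mul_apply, Fin.sum_univ_two] <;> ring

lemma F_congr {x y z x' y' z' : ℝ} (h1 : x = x') (h2 : y = y') (h3 : z = z') :
    F x y z = F x' y' z' := by rw [h1, h2, h3]

lemma key (α : ℝ) (hα : α ≠ 0) :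
    ({A : Matrix (Fin 2) (Fin 2) ℝ | ∃ g : Matrix.SpecialLinearGroup (Fin 2) ℝ,
        A = (g : Matrix (Fin 2) (Fin 2) ℝ) * (α • T) * ((g⁻¹ : Matrix.SpecialLinearGroup (Fin 2) ℝ) : Matrix (Fin 2) (Fin 2) ℝ)} =
      {A : Matrix (Fin 2) (Fin 2) ℝ |
        ∃ x y z : ℝ, x ^ 2 + y ^ 2 - z ^ 2 = 0 ∧ α * z < 0 ∧ A = F x y z}) := by
  ext A
  simp only [Set.mem_setOf_eq]
  constructor
  · rintro ⟨g, rfl⟩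
    set a := (g : Matrix (Fin 2) (Fin 2) ℝ) 0 0
    set b := (g : Matrix (Fin 2) (Fin 2) ℝ) 0 1
    set c := (g : Matrix (Fin 2) (Fin 2) ℝ) 1 0
    set d := (g : Matrix (Fin 2) (Fin 2) ℝ) 1 1
    have hdet : a * d - b * c = 1 := by
      have := g.2
      rwa [Matrix.det_fin_two] at this
    have hbd : 0 < b ^ 2 + d ^ 2 := by
      nlinarith [sq_nonneg (a * b + c * d), sq_nonneg a, sq_nonneg c, sq_nonneg b, sq_nonneg d]
    refine ⟨_, _, _, by ring, ?_, conj_eq α g⟩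
    have hα2 : 0 < α ^ 2 := by positivity
    nlinarith [mul_pos hα2 hbd]
  · rintro ⟨x, y, z, h1, h2, rfl⟩
    have hyzα : 0 ≤ (y - z) / α := by
      rcases hα.lt_or_gt with h | h
      · have hz : 0 < z := by nlinarith
        have : y - z ≤ 0 := by nlinarith [sq_nonneg x]
        rw [div_nonneg_iff]
        exact Or.inr ⟨this, h.le⟩
      · have hz : z < 0 := by nlinarith
        have : 0 ≤ y - z := by nlinarith [sq_nonneg x]
        exact div_nonneg this h.le
    rcases eq_or_lt_of_le hyzα with h0 | hpos
    · -- y = z case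
      have hyz0 : y = z := by
        field_simp at h0; linarith
      have hx : x = 0 := by
        have hx2 : x ^ 2 = 0 := by
          have : y ^ 2 = z ^ 2 := by rw [hyz0]
          linarith
        exact pow_eq_zero_iff (by norm_num) |>.mp hx2
      have hzα : 0 < -2 * z / α := by
        have hrw : -2 * z / α = (-2 * (α * z)) / α ^ 2 := by
          field_simp
        rw [hrw]
        apply div_pos (by linarith) (by positivity)
      set b := Real.sqrt (-2 * z / α) with hbdef
      have hb2 : b ^ 2 = -2 * z / α := Real.sq_sqrt hzα.le
      have hbpos : 0 < b := Real.sqrt_pos.mpr hzα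
      have hdet : Matrix.det !![(0:ℝ), b; -1/b, 0] = 1 := by
        rw [Matrix.det_fin_two_of]
        field_simp
        norm_num
      refine ⟨(⟨!![(0:ℝ), b; -1/b, 0], hdet⟩ : Matrix.SpecialLinearGroup (Fin 2) ℝ), ?_⟩
      refine Eq.trans ?_ (conj_eq α _).symm
      apply F_congr
      · have : ((⟨!![(0:ℝ), b; -1/b, 0], hdet⟩ : Matrix.SpecialLinearGroup (Fin 2) ℝ) : Matrix (Fin 2) (Fin 2) ℝ) 0 1 = b := rfl
        rw [this]
        show x = α * (b * !![(0:ℝ), b; -1/b, 0] 1 1)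
        simp [hx]
      · show y = α * ((!![(0:ℝ), b; -1/b, 0] 1 1) ^ 2 - b ^ 2) / 2
        simp [hb2]
        field_simp
        linarith [hyz0]
      · show z = -(α * (b ^ 2 + (!![(0:ℝ), b; -1/b, 0] 1 1) ^ 2) / 2)
        simp [hb2]
        field_simp
    · -- y ≠ z case
      have hyzne : y - z ≠ 0 := by
        intro h
        rw [h] at hpos
        simp at hpos
      set d := Real.sqrt ((y - z) / α) with hddef
      have hd2 : d ^ 2 = (y - z) / α := Real.sq_sqrt hpos.le
      have hdpos : 0 < d := Real.sqrt_pos.mpr hpos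
      have hdet : Matrix.det !![1/d, x/(α*d); (0:ℝ), d] = 1 := by
        rw [Matrix.det_fin_two_of]
        field_simp
        ring
      refine ⟨(⟨!![1/d, x/(α*d); (0:ℝ), d], hdet⟩ : Matrix.SpecialLinearGroup (Fin 2) ℝ), ?_⟩
      refine Eq.trans ?_ (conj_eq α _).symm
      have e1 : ((⟨!![1/d, x/(α*d); (0:ℝ), d], hdet⟩ : Matrix.SpecialLinearGroup (Fin 2) ℝ) : Matrix (Fin 2) (Fin 2) ℝ) 0 1 = x/(α*d) := rfl
      have e2 : ((⟨!![1/d, x/(α*d); (0:ℝ), d], hdet⟩ : Matrix.SpecialLinearGroup (Fin 2) ℝ) : Matrix (Fin 2) (Fin 2) ℝ) 1 1 = d := rfl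
      rw [e1, e2]
      have hαd : α * d ^ 2 = y - z := by
        rw [hd2]; field_simp
      have hb2 : α * (x/(α*d)) ^ 2 = -(y + z) := by
        have hx2 : x ^ 2 = -(y + z) * (y - z) := by nlinarith
        have hrw : α * (x/(α*d)) ^ 2 = x ^ 2 / (α * d ^ 2) := by
          field_simp
        rw [hrw, hαd, hx2, mul_div_assoc, div_self hyzne, mul_one]
      apply F_congr
      · field_simp
      · linear_combination (hb2 - hαd) / 2
      · linear_combination (hb2 + hαd) / 2

/-- For a positive real number `α`, the adjoint `SL(2,ℝ)`-orbit of `αT` is the lower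
one-sheeted cone `{F(x,y,z) : x² + y² − z² = 0, z < 0}`; moreover for `α < 0` the orbit
of `αT` is the upper one-sheeted cone `{F(x,y,z) : x² + y² − z² = 0, z > 0}`. -/
theorem adjoint_orbit_T (α : ℝ) (hα : 0 < α) :
    ({A : Matrix (Fin 2) (Fin 2) ℝ | ∃ g : Matrix.SpecialLinearGroup (Fin 2) ℝ,
        A = (g : Matrix (Fin 2) (Fin 2) ℝ) * (α • T) * ((g⁻¹ : Matrix.SpecialLinearGroup (Fin 2) ℝ) : Matrix (Fin 2) (Fin 2) ℝ)} =
      {A : Matrix (Fin 2) (Fin 2) ℝ |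
        ∃ x y z : ℝ, x ^ 2 + y ^ 2 - z ^ 2 = 0 ∧ z < 0 ∧ A = F x y z}) ∧
    ∀ β : ℝ, β < 0 →
      ({A : Matrix (Fin 2) (Fin 2) ℝ | ∃ g : Matrix.SpecialLinearGroup (Fin 2) ℝ,
          A = (g : Matrix (Fin 2) (Fin 2) ℝ) * (β • T) * ((g⁻¹ : Matrix.SpecialLinearGroup (Fin 2) ℝ) : Matrix (Fin 2) (Fin 2) ℝ)} =
        {A : Matrix (Fin 2) (Fin 2) ℝ |
          ∃ x y z : ℝ, x ^ 2 + y ^ 2 - z ^ 2 = 0 ∧ 0 < z ∧ A = F x y z}) := by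
  constructor
  · rw [key α hα.ne']
    ext A
    simp only [Set.mem_setOf_eq]
    constructor
    · rintro ⟨x, y, z, h1, h2, h3⟩
      exact ⟨x, y, z, h1, by nlinarith, h3⟩
    · rintro ⟨x, y, z, h1, h2, h3⟩
      exact ⟨x, y, z, h1, mul_neg_of_pos_of_neg hα h2, h3⟩
  · intro β hβ
    rw [key β hβ.ne]
    ext A
    simp only [Set.mem_setOf_eq]
    constructor
    · rintro ⟨x, y, z, h1, h2, h3⟩
      exact ⟨x, y, z, h1, by nlinarith, h3⟩
    · rintro ⟨x, y, z, h1, h2, h3⟩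
      exact ⟨x, y, z, h1, mul_neg_of_neg_of_pos hβ h2, h3⟩
end

section
/- Let ω = φ ∘ exp : 𝔰𝔩(2,ℝ) → ℍ, where exp is the matrix exponential (which maps 𝔰𝔩(2,ℝ) into SL(2,ℝ)) and φ : SL(2,ℝ) → ℍ sends g with rows (a, b) and (c, d) to (ai + b)/(ci + d). Then the image of the nilpotent cone under ω is the whole upper half-plane: ω(𝒩_ℝ) = ℍ. Equivalently, for every τ ∈ ℍ there exists a nilpotent matrix N ∈ 𝔰𝔩(2,ℝ) such that exp(N) maps i to τ under the Möbius action. -/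
open NormedSpace in
lemma exp_sq_zero (N : Matrix (Fin 2) (Fin 2) ℝ) (h : N ^ 2 = 0) :
    exp N = 1 + N := by
  rw [exp_eq_tsum ℝ]
  show (∑' n : ℕ, ((n.factorial : ℝ))⁻¹ • N ^ n) = 1 + N
  rw [tsum_eq_sum (s := {0, 1}) (by
    intro n hn
    have h2 : 2 ≤ n := by
      simp only [Finset.mem_insert, Finset.mem_singleton, not_or] at hn
      omega
    have : N ^ n = 0 := pow_eq_zero_of_le h2 h
    simp [this])]
  norm_num



open NormedSpace in
/-- The image of the nilpotent cone `𝒩_ℝ ⊆ 𝔰𝔩(2,ℝ)` under `ω = φ ∘ exp` is the whole upper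
half-plane `ℍ`, where `exp` is the matrix exponential and `φ(g) = (ai + b)/(ci + d)` for `g`
with rows `(a, b)` and `(c, d)`; i.e. for every `τ` with `Im τ > 0` there is a nilpotent
`N ∈ 𝔰𝔩(2,ℝ)` with `exp(N)·i = τ`. -/
theorem omega_image_nilpotentCone :
    {w : ℂ | ∃ N : Matrix (Fin 2) (Fin 2) ℝ, Matrix.trace N = 0 ∧ IsNilpotent N ∧
      w = (((exp N) 0 0 : ℝ) * Complex.I + ((exp N) 0 1 : ℝ)) /
          (((exp N) 1 0 : ℝ) * Complex.I + ((exp N) 1 1 : ℝ))} =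
    {τ : ℂ | 0 < τ.im} := by
  ext τ
  simp only [Set.mem_setOf_eq]
  constructor
  · rintro ⟨N, htr, hnil, rfl⟩
    set a := N 0 0 with ha
    set b := N 0 1 with hb
    set c := N 1 0 with hc
    set d := N 1 1 with hd
    have htr2 : a + d = 0 := by rw [Matrix.trace_fin_two] at htr; exact htr
    have hdet : a * d - b * c = 0 := by
      obtain ⟨k, hk⟩ := hnil
      have : N.det ^ k = 0 := by rw [← Matrix.det_pow, hk]; simp
      have h0 : N.det = 0 := (pow_eq_zero_iff'.mp this).1
      rw [Matrix.det_fin_two] at h0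
      exact h0
    have hN2 : N ^ 2 = 0 := by
      ext i j
      fin_cases i <;> fin_cases j <;>
        simp [pow_two, Matrix.mul_apply, Fin.sum_univ_two, ← ha, ← hb, ← hc, ← hd]
      · linear_combination a * htr2 - hdet
      · linear_combination b * htr2
      · linear_combination c * htr2
      · linear_combination d * htr2 - hdet
    rw [exp_sq_zero N hN2]
    simp only [Matrix.add_apply, Matrix.one_apply_eq, Matrix.one_apply_ne (by decide : (0:Fin 2) ≠ 1),
      Matrix.one_apply_ne (by decide : (1:Fin 2) ≠ 0), zero_add]
    have h1 : (1 + a) * (1 + d) - b * c = 1 := by linear_combination htr2 + hdet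
    have hpos : 0 < c ^ 2 + (1 + d) ^ 2 := by
      rcases eq_or_ne c 0 with hc0 | hc0
      · have hd0 : (1 : ℝ) + d ≠ 0 := by
          intro hd0
          rw [hc0] at h1
          nlinarith
        positivity
      · positivity
    have him : (((((1 : ℝ) + a : ℝ) : ℂ) * Complex.I + ((b : ℝ) : ℂ)) /
        (((c : ℝ) : ℂ) * Complex.I + (((1 : ℝ) + d : ℝ) : ℂ))).im = 1 / (c^2 + (1+d)^2) := by
      rw [Complex.div_im]
      simp [Complex.normSq_apply]
      rw [div_sub_div_same, h1, inv_eq_one_div]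
      congr 1
      ring
    rw [him]
    positivity
  · intro hτ
    set x := τ.re with hx
    set y := τ.im with hy
    have hy0 : 0 < y := hτ
    by_cases hti : τ = Complex.I
    · refine ⟨0, by simp, ⟨1, by simp⟩, ?_⟩
      rw [exp_zero]
      simp [Matrix.one_apply, hti]
    · have hq0 : 0 < (y - 1) ^ 2 + x ^ 2 := by
        rcases eq_or_lt_of_le (by positivity : (0:ℝ) ≤ (y - 1) ^ 2 + x ^ 2) with h0 | h
        · exfalso
          have h1 : y = 1 := by nlinarith [sq_nonneg (y - 1), sq_nonneg x]
          have h2 : x = 0 := by nlinarith [sq_nonneg (y - 1), sq_nonneg x]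
          exact hti (Complex.ext (by simpa using h2) (by simpa using h1))
        · exact h
      obtain ⟨u, c, hcne, hcirc, hline⟩ :
          ∃ u c : ℝ, c ≠ 0 ∧ c ^ 2 + u ^ 2 = 1 / y ∧ c * x + u * (y + 1) = 2 := by
        have hq : 0 < ((y - 1) ^ 2 + x ^ 2) / y := div_pos hq0 hy0
        obtain ⟨s, hs2, hcnum⟩ : ∃ s : ℝ, s ^ 2 * y = (y - 1) ^ 2 + x ^ 2 ∧
            2 * x - (y + 1) * s ≠ 0 := by
          have hsq : 0 < Real.sqrt (((y - 1) ^ 2 + x ^ 2) / y) := Real.sqrt_pos.mpr hq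
          have hsqs : Real.sqrt (((y - 1) ^ 2 + x ^ 2) / y) ^ 2 * y = (y - 1) ^ 2 + x ^ 2 := by
            rw [Real.sq_sqrt hq.le]; field_simp
          rcases le_or_gt 0 x with hxx | hxx
          · refine ⟨-Real.sqrt (((y - 1) ^ 2 + x ^ 2) / y), by rw [neg_pow]; simpa using hsqs, ?_⟩
            have : 0 < (y + 1) * Real.sqrt (((y - 1) ^ 2 + x ^ 2) / y) :=
              mul_pos (by linarith) hsq
            nlinarith
          · refine ⟨Real.sqrt (((y - 1) ^ 2 + x ^ 2) / y), hsqs, ?_⟩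
            have : 0 < (y + 1) * Real.sqrt (((y - 1) ^ 2 + x ^ 2) / y) :=
              mul_pos (by linarith) hsq
            nlinarith
        have hD : 0 < (y + 1) ^ 2 + x ^ 2 := by positivity
        refine ⟨(2 * (y + 1) + x * s) / ((y + 1) ^ 2 + x ^ 2),
            (2 * x - (y + 1) * s) / ((y + 1) ^ 2 + x ^ 2),
            div_ne_zero hcnum hD.ne', ?_, ?_⟩
        · field_simp
          linear_combination ((y + 1) ^ 2 + x ^ 2) * hs2
        · field_simp
          ring
      have hcirc' : y * c ^ 2 + y * u ^ 2 = 1 := by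
        have := hcirc
        field_simp at this
        linarith [this]
      refine ⟨!![1 - u, -(1 - u) ^ 2 / c; c, -(1 - u)], ?_, ?_, ?_⟩
      · rw [Matrix.trace_fin_two]; simp
      · refine ⟨2, ?_⟩
        ext i j
        fin_cases i <;> fin_cases j <;>
          simp [pow_two, Matrix.mul_apply, Fin.sum_univ_two] <;> (try field_simp) <;> ring
      · have hN2 : (!![1 - u, -(1 - u) ^ 2 / c; c, -(1 - u)] : Matrix (Fin 2) (Fin 2) ℝ) ^ 2 = 0 := by
          ext i j
          fin_cases i <;> fin_cases j <;>
            simp [pow_two, Matrix.mul_apply, Fin.sum_univ_two] <;> (try field_simp) <;> ring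
        rw [exp_sq_zero _ hN2]
        have e00 : (!![1 - u, -(1 - u) ^ 2 / c; c, -(1 - u)] : Matrix (Fin 2) (Fin 2) ℝ) 0 0 = 1 - u := by simp
        have e01 : (!![1 - u, -(1 - u) ^ 2 / c; c, -(1 - u)] : Matrix (Fin 2) (Fin 2) ℝ) 0 1 = -(1 - u) ^ 2 / c := by simp
        have e10 : (!![1 - u, -(1 - u) ^ 2 / c; c, -(1 - u)] : Matrix (Fin 2) (Fin 2) ℝ) 1 0 = c := by simp
        have e11 : (!![1 - u, -(1 - u) ^ 2 / c; c, -(1 - u)] : Matrix (Fin 2) (Fin 2) ℝ) 1 1 = -(1 - u) := by simp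
        simp only [Matrix.add_apply, Matrix.one_apply_eq,
          Matrix.one_apply_ne (by decide : (0 : Fin 2) ≠ 1),
          Matrix.one_apply_ne (by decide : (1 : Fin 2) ≠ 0), zero_add, e00, e01, e10, e11]
        have hw : ((c : ℝ) : ℂ) * Complex.I + (((1 : ℝ) + -(1 - u) : ℝ) : ℂ) ≠ 0 := by
          intro h0
          have := congrArg Complex.im h0
          simp at this
          exact hcne this
        rw [eq_div_iff hw]
        apply Complex.ext
        · simp only [Complex.add_re, Complex.add_im, Complex.mul_re, Complex.mul_im,
            Complex.I_re, Complex.I_im, Complex.ofReal_re, Complex.ofReal_im,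
            mul_zero, mul_one, zero_mul, sub_zero, zero_add, add_zero]
          rw [← hx, ← hy]
          field_simp
          linear_combination u * hline - hcirc'
        · simp only [Complex.add_re, Complex.add_im, Complex.mul_re, Complex.mul_im,
            Complex.I_re, Complex.I_im, Complex.ofReal_re, Complex.ofReal_im,
            mul_zero, mul_one, zero_mul, sub_zero, zero_add, add_zero]
          rw [← hx, ← hy]
          linarith [hline]
end
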